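/- Define g: RP² × RP² → RP⁴ in homogeneous coordinates by g([r:s:t],[r':s':t']) = [rr'−ss' : rs'+sr' : rt'+tr' : st'+ts' : tt']. Then g is well defined: the image vector is nonzero whenever (r,s,t) ≠ 0 and (r',s',t') ≠ 0, and the point of RP⁴ is independent of the homogeneous representatives. -/

import Mathlib

/-- g on homogeneous coordinates: for (r,s,t), (r',s',t') ∈ ℝ³, the vector
(rr'−ss', rs'+sr', rt'+tr', st'+ts', tt') ∈ ℝ⁵. -/
def gvec (a b : ℝ × ℝ × ℝ) : Fin 5 → ℝ :=
  ![a.1 * b.1 - a.2.1 * b.2.1, a.1 * b.2.1 + a.2.1 * b.1,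
    a.1 * b.2.2 + a.2.2 * b.1, a.2.1 * b.2.2 + a.2.2 * b.2.1,
    a.2.2 * b.2.2]

/-- g([r:s:t],[r':s':t']) = [rr'−ss' : rs'+sr' : rt'+tr' : st'+ts' : tt'] is a
well-defined map RP² × RP² → RP⁴: the image vector is nonzero for nonzero inputs,
and rescaling the homogeneous representatives rescales the image vector by a
nonzero real scalar. -/
theorem stmt16 :
    (∀ a b : ℝ × ℝ × ℝ, a ≠ 0 → b ≠ 0 → gvec a b ≠ 0) ∧
    (∀ a b : ℝ × ℝ × ℝ, ∀ l m : ℝ, l ≠ 0 → m ≠ 0 →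
      ∃ n : ℝ, n ≠ 0 ∧ gvec (l • a) (m • b) = n • gvec a b) := by
  constructor
  · rintro ⟨r, s, t⟩ ⟨r', s', t'⟩ ha hb h
    have h0 := congrFun h 0
    have h1 := congrFun h 1
    have h2 := congrFun h 2
    have h3 := congrFun h 3
    have h4 := congrFun h 4
    simp [gvec] at h0 h1 h2 h3 h4
    -- (r²+s²)(r'²+s'²) = 0
    have key : (r^2 + s^2) * (r'^2 + s'^2) = 0 := by nlinarith [sq_nonneg (r*r' - s*s'), sq_nonneg (r*s' + s*r')]
    rcases mul_eq_zero.mp key with hc | hc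
    · have hr : r = 0 := by nlinarith [sq_nonneg r, sq_nonneg s]
      have hs : s = 0 := by nlinarith [sq_nonneg r, sq_nonneg s]
      subst hr hs
      have ht : t ≠ 0 := by
        intro ht; exact ha (by simp [Prod.ext_iff, ht])
      have ht' : t' = 0 := by
        rcases h4 with h | h
        · exact absurd h ht
        · exact h
      have hr' : r' = 0 := by
        have := h2; field_simp [ht'] at this; simp only [zero_mul, mul_zero, add_zero, zero_add, ht'] at this
        rcases mul_eq_zero.mp this with h | h
        · exact absurd h ht
        · exact h
      have hs' : s' = 0 := by
        have := h3; field_simp [ht'] at this; simp only [zero_mul, mul_zero, add_zero, zero_add, ht'] at this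
        rcases mul_eq_zero.mp this with h | h
        · exact absurd h ht
        · exact h
      exact hb (by simp [Prod.ext_iff, hr', hs', ht'])
    · have hr : r' = 0 := by nlinarith [sq_nonneg r', sq_nonneg s']
      have hs : s' = 0 := by nlinarith [sq_nonneg r', sq_nonneg s']
      subst hr hs
      have ht : t' ≠ 0 := by
        intro ht; exact hb (by simp [Prod.ext_iff, ht])
      have ht' : t = 0 := by
        rcases h4 with h | h
        · exact h
        · exact absurd h ht
      have hr' : r = 0 := by
        have := h2; field_simp [ht'] at this; simp only [zero_mul, mul_zero, add_zero, zero_add, ht'] at this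
        rcases mul_eq_zero.mp this with h | h
        · exact h
        · exact absurd h ht
      have hs' : s = 0 := by
        have := h3; field_simp [ht'] at this; simp only [zero_mul, mul_zero, add_zero, zero_add, ht'] at this
        rcases mul_eq_zero.mp this with h | h
        · exact h
        · exact absurd h ht
      exact ha (by simp [Prod.ext_iff, hr', hs', ht'])
  · intro a b l m hl hm
    refine ⟨l * m, mul_ne_zero hl hm, ?_⟩
    funext i
    fin_cases i <;>
      simp [gvec, Prod.smul_def, smul_eq_mul] <;> ring
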